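/- arXiv:1904.08604 — 4 statements merged into one kernel-verified Lean document; each statement's English description precedes it below -/
import Mathlib

section
/- Let K be a complete discrete valuation field whose residue field F has characteristic p > 0, and let k = ⋂_{r ≥ 0} F^{p^r} be the largest perfect subfield of F. Then the subring A = ⋂_{r ≥ 0} (O_K/pO_K)^{p^r} of O_K/pO_K maps bijectively onto k under the reduction map O_K/pO_K → F; equivalently, A equals the image of k under the canonical ring homomorphism W(k) → O_K → O_K/pO_K from the ring of Witt vectors. In particular, if K has characteristic p (so that O_K/pO_K = O_K), then ⋂_{r ≥ 0} (O_K)^{p^r} = k. -/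
open IsLocalRing Multiplicative

section Aux

variable {K : Type*} [Field K] (vK : Valuation K (WithZero (Multiplicative ℤ)))

lemma aux_dvd (a b : vK.valuationSubring) (h : vK (b : K) ≤ vK (a : K)) : a ∣ b := by
  by_cases ha : (a : K) = 0
  · have : vK (b : K) = 0 := le_antisymm (by simpa [ha] using h) zero_le'
    have hb : (b : K) = 0 := by rwa [Valuation.zero_iff] at this
    have : b = 0 := Subtype.ext (by simp [hb])
    simp [this]
  · have hva : vK (a : K) ≠ 0 := by simpa [Valuation.zero_iff] using ha
    have hc : vK ((b : K) / (a : K)) ≤ 1 := by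
      rw [map_div₀]
      exact div_le_one_of_le₀ h zero_le'
    refine ⟨⟨(b : K) / (a : K), hc⟩, ?_⟩
    ext
    push_cast
    field_simp

lemma aux_mem_max (x : vK.valuationSubring) :
    x ∈ maximalIdeal vK.valuationSubring ↔ vK (x : K) < 1 := by
  rw [IsLocalRing.mem_maximalIdeal, mem_nonunits_iff]
  constructor
  · intro h
    have hx1 : vK (x : K) ≤ 1 := x.2
    rcases lt_or_eq_of_le hx1 with h1 | h1
    · exact h1
    · exfalso
      apply h
      have hx0 : (x : K) ≠ 0 := by
        intro h0
        rw [h0] at h1; simp at h1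
      have hinv : vK (x : K)⁻¹ ≤ 1 := by
        rw [map_inv₀, h1]; simp
      refine IsUnit.of_mul_eq_one (a := x) ⟨(x : K)⁻¹, hinv⟩ (Subtype.ext ?_)
      push_cast
      field_simp
  · intro h hu
    rcases hu with ⟨u, hu⟩
    have h1 : ((u : vK.valuationSubring) : K) * (((u⁻¹ : _) : vK.valuationSubring) : K) = 1 := by
      norm_cast
      simp
    have h2 : vK ((u : vK.valuationSubring) : K) * vK (((u⁻¹ : _) : vK.valuationSubring) : K) = 1 := by
      rw [← map_mul, h1, map_one]
    have hle : vK ((u : vK.valuationSubring) : K) < 1 := hu ▸ h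
    have h3 : vK ((u : vK.valuationSubring) : K) * vK (((u⁻¹ : _) : vK.valuationSubring) : K) < 1 := by
      calc vK ((u : vK.valuationSubring) : K) * vK (((u⁻¹ : _) : vK.valuationSubring) : K)
          ≤ vK ((u : vK.valuationSubring) : K) * 1 := mul_le_mul_right ((u⁻¹ : _) : vK.valuationSubring).2 _
        _ = vK ((u : vK.valuationSubring) : K) := mul_one _
        _ < 1 := hle
    rw [h2] at h3
    exact absurd h3 (lt_irrefl 1)

lemma aux_pow_dvd (p : ℕ) (hp : p.Prime)
    (hpm : (p : vK.valuationSubring) ∈ maximalIdeal vK.valuationSubring)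
    (hp0 : (p : vK.valuationSubring) ≠ 0) :
    ∃ N : ℕ, ∀ r, N ≤ r → ∀ c : vK.valuationSubring, c ∈ maximalIdeal vK.valuationSubring →
      (p : vK.valuationSubring) ∣ c ^ p ^ r := by
  have hvp1 : vK ((p : vK.valuationSubring) : K) < 1 := (aux_mem_max vK _).mp hpm
  have hvp0 : vK ((p : vK.valuationSubring) : K) ≠ 0 := by
    simp only [ne_eq, Valuation.zero_iff]
    exact fun h => hp0 (Subtype.ext (by rw [h]; simp))
  obtain ⟨u, hu⟩ := WithZero.ne_zero_iff_exists.mp hvp0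
  have hd : u.toAdd < 0 := by
    have : (u : WithZero (Multiplicative ℤ)) < 1 := hu ▸ hvp1
    rw [← WithZero.coe_one, WithZero.coe_lt_coe] at this
    simpa using Multiplicative.toAdd_lt.mpr this
  refine ⟨u.toAdd.natAbs, fun r hr c hc => ?_⟩
  by_cases hc0 : c = 0
  · subst hc0
    rw [zero_pow (pow_ne_zero _ hp.ne_zero)]
    exact dvd_zero _
  have hvc1 : vK (c : K) < 1 := (aux_mem_max vK _).mp hc
  have hvc0 : vK (c : K) ≠ 0 := by
    simp only [ne_eq, Valuation.zero_iff]
    exact fun h => hc0 (Subtype.ext (by simpa using h))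
  obtain ⟨w, hw⟩ := WithZero.ne_zero_iff_exists.mp hvc0
  have hwd : w.toAdd ≤ -1 := by
    have : (w : WithZero (Multiplicative ℤ)) < 1 := hw ▸ hvc1
    rw [← WithZero.coe_one, WithZero.coe_lt_coe] at this
    have h' : w.toAdd < 0 := by simpa using Multiplicative.toAdd_lt.mpr this
    omega
  apply aux_dvd
  have hcoe : ((c ^ p ^ r : vK.valuationSubring) : K) = (c : K) ^ p ^ r := by push_cast; ring
  rw [hcoe, map_pow, ← hw, ← hu, ← WithZero.coe_pow, WithZero.coe_le_coe,
    ← Multiplicative.toAdd_le, toAdd_pow, nsmul_eq_mul]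
  have h1 : (u.toAdd.natAbs : ℤ) ≤ (p ^ r : ℕ) := by
    exact_mod_cast le_of_lt (lt_of_le_of_lt hr (Nat.lt_pow_self (n := r) hp.one_lt))
  have h2 : -((p ^ r : ℕ) : ℤ) ≤ u.toAdd := by
    omega
  calc ((p ^ r : ℕ) : ℤ) * w.toAdd ≤ ((p ^ r : ℕ) : ℤ) * (-1) := by
        apply mul_le_mul_of_nonneg_left hwd (by positivity)
    _ = -((p ^ r : ℕ) : ℤ) := by ring
    _ ≤ u.toAdd := h2

lemma aux_cauchy {R : Type*} [CommRing R] (I : Ideal R) (f : ℕ → R)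
    (hf : ∀ s, f (s + 1) - f s ∈ I ^ s) : ∀ {m n : ℕ}, m ≤ n → f n - f m ∈ I ^ m := by
  intro m n h
  obtain ⟨k, rfl⟩ := Nat.exists_eq_add_of_le h
  induction k with
  | zero => simpa using (I ^ m).zero_mem
  | succ k ih =>
    have heq : f (m + (k + 1)) - f m = (f ((m + k) + 1) - f (m + k)) + (f (m + k) - f m) := by
      have : m + (k + 1) = (m + k) + 1 := by ring
      rw [this]; ring
    rw [heq]
    exact add_mem (Ideal.pow_le_pow_right (Nat.le_add_right m k) (hf (m + k))) (ih (Nat.le_add_right m k))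

lemma aux_smul_top {R : Type*} [CommRing R] (I : Ideal R) :
    (I • ⊤ : Submodule R R) = I := by
  rw [smul_eq_mul, Ideal.mul_top]

lemma aux_limit {R : Type*} [CommRing R] {I : Ideal R} (hc : IsPrecomplete I R) (f : ℕ → R)
    (hf : ∀ s, f (s + 1) - f s ∈ I ^ s) : ∃ L, ∀ n, L - f n ∈ I ^ n := by
  obtain ⟨L, hL⟩ := hc.prec (f := f) (fun {m n} h => by
    rw [SModEq.sub_mem, aux_smul_top]
    exact neg_mem_iff.mp (by simpa using aux_cauchy I f hf h))
  refine ⟨L, fun n => ?_⟩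
  have := hL n
  rw [SModEq.sub_mem, aux_smul_top] at this
  exact neg_mem_iff.mp (by simpa using this)

lemma aux_root {R : Type*} [CommRing R] {I : Ideal R} (hc : IsAdicComplete I R) {p : ℕ}
    [Fact p.Prime] [CharP R p] (u : ℕ → R) (hu : ∀ s, u (s + 1) ^ p - u s ∈ I) :
    ∃ L : R, (L - u 0 ∈ I) ∧ ∀ r, ∃ w, w ^ p ^ r = L := by
  have hp : p.Prime := Fact.out
  have key : ∀ (r : ℕ), ∀ s, (u (r + (s + 1)) ^ p ^ (s + 1) - u (r + s) ^ p ^ s) ∈ I ^ s := by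
    intro r s
    have h1 : u (r + (s + 1)) ^ p ^ (s + 1) - u (r + s) ^ p ^ s
        = (u ((r + s) + 1) ^ p - u (r + s)) ^ p ^ s := by
      rw [sub_pow_char_pow, ← pow_mul, ← pow_succ']
      congr 2 <;> omega
    rw [h1]
    exact Ideal.pow_le_pow_right (Nat.le_of_lt (Nat.lt_pow_self (n := s) hp.one_lt))
      (Ideal.pow_mem_pow (hu (r + s)) _)
  -- the limits
  have lim : ∀ r : ℕ, ∃ W : R, ∀ n, W - u (r + n) ^ p ^ n ∈ I ^ n := by
    intro r
    exact aux_limit hc.toIsPrecomplete (fun s => u (r + s) ^ p ^ s) (key r)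
  obtain ⟨L, hL⟩ := lim 0
  have hL' : ∀ n, L - u n ^ p ^ n ∈ I ^ n := by
    intro n; simpa using hL n
  refine ⟨L, ?_, ?_⟩
  · have h1 : L - u 1 ^ p ^ 1 ∈ I ^ 1 := hL' 1
    have h2 : u 1 ^ p - u 0 ∈ I := hu 0
    have : L - u 0 = (L - u 1 ^ p ^ 1) + (u 1 ^ p - u 0) := by rw [pow_one]; ring
    rw [this]
    exact add_mem (by simpa using h1) h2
  · intro r
    obtain ⟨W, hW⟩ := lim r
    refine ⟨W, ?_⟩
    have haus : ∀ n, W ^ p ^ r - L ∈ I ^ n := by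
      intro n
      have h1 : W ^ p ^ r - (u (r + n) ^ p ^ n) ^ p ^ r ∈ I ^ n := by
        have := Ideal.pow_mem_pow (hW n) (p ^ r)
        rw [sub_pow_char_pow] at this
        refine Ideal.pow_le_pow_right ?_ ((pow_mul I n (p^r)) ▸ this)
        calc n = n * 1 := (mul_one n).symm
          _ ≤ n * p ^ r := Nat.mul_le_mul_left n (Nat.one_le_iff_ne_zero.mpr (pow_ne_zero _ hp.ne_zero))
      have h2 : (u (r + n) ^ p ^ n) ^ p ^ r = u (r + n) ^ p ^ (r + n) := by
        rw [← pow_mul, ← pow_add, Nat.add_comm n r]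
      have h3 : L - u (r + n) ^ p ^ (r + n) ∈ I ^ n :=
        Ideal.pow_le_pow_right (Nat.le_add_left n r) (hL' (r + n))
      have : W ^ p ^ r - L = (W ^ p ^ r - (u (r + n) ^ p ^ n) ^ p ^ r)
          - (L - u (r + n) ^ p ^ (r + n)) := by rw [h2]; ring
      rw [this]
      exact sub_mem h1 h3
    have := hc.toIsHausdorff.haus (W ^ p ^ r - L) (fun n => by
      rw [SModEq.zero, aux_smul_top]; exact haus n)
    exact sub_eq_zero.mp this

end Aux

theorem aux_general (R : Type*) [CommRing R] [IsLocalRing R] (p : ℕ) (hp : p.Prime)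
    [hF : CharP (ResidueField R) p]
    (hcompl : IsAdicComplete (maximalIdeal R) R)
    (hdvd : (p : R) ≠ 0 → ∃ N, ∀ c ∈ maximalIdeal R, (p : R) ∣ c ^ p ^ N)
    (H : Ideal.span {(p : R)} ≤ maximalIdeal R) :
    Set.BijOn (Ideal.Quotient.factor (S := Ideal.span {(p : R)}) (T := maximalIdeal R) H)
      {x : R ⧸ Ideal.span {(p : R)} | ∀ r : ℕ, ∃ y, y ^ p ^ r = x}
      {x : ResidueField R | ∀ r : ℕ, ∃ y, y ^ p ^ r = x} := by
  classical
  haveI : Fact p.Prime := ⟨hp⟩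
  have hpm : (p : R) ∈ maximalIdeal R := H (Ideal.subset_span rfl)
  have hφmk : ∀ x : R,
      Ideal.Quotient.factor (S := Ideal.span {(p : R)}) (T := maximalIdeal R) H
        (Ideal.Quotient.mk _ x) = Ideal.Quotient.mk (maximalIdeal R) x := fun x =>
    Ideal.Quotient.factor_mk H x
  have hFinj : ∀ (r : ℕ) (a b : ResidueField R), a ^ p ^ r = b ^ p ^ r → a = b := by
    intro r a b h
    have h1 : (a - b) ^ p ^ r = 0 := by rw [sub_pow_char_pow, h, sub_self]
    exact sub_eq_zero.mp (pow_eq_zero_iff (pow_ne_zero _ hp.ne_zero) |>.mp h1)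
  have hIne : Ideal.span {(p : R)} ≠ ⊤ :=
    fun h => (maximalIdeal.isMaximal R).ne_top (top_le_iff.mp (h ▸ H))
  haveI : Nontrivial (R ⧸ Ideal.span {(p : R)}) := Ideal.Quotient.nontrivial_iff.mpr hIne
  haveI : CharP (R ⧸ Ideal.span {(p : R)}) p := by
    rw [CharP.charP_iff_prime_eq_zero hp]
    have h1 : ((p : ℕ) : R ⧸ Ideal.span {(p : R)}) = Ideal.Quotient.mk _ ((p : ℕ) : R) := by
      rw [map_natCast]
    rw [h1, Ideal.Quotient.eq_zero_iff_mem]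
    exact Ideal.subset_span rfl
  -- the key lemma in the case `p ≠ 0`
  have KL : ∀ N : ℕ, (∀ c ∈ maximalIdeal R, (p : R) ∣ c ^ p ^ N) →
      ∀ t s : R ⧸ Ideal.span {(p : R)},
      Ideal.Quotient.factor (S := Ideal.span {(p : R)}) (T := maximalIdeal R) H t =
        Ideal.Quotient.factor (S := Ideal.span {(p : R)}) (T := maximalIdeal R) H s →
      t ^ p ^ N = s ^ p ^ N := by
    intro N hN t s h
    obtain ⟨t', rfl⟩ := Ideal.Quotient.mk_surjective t
    obtain ⟨s', rfl⟩ := Ideal.Quotient.mk_surjective s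
    rw [hφmk, hφmk] at h
    have h' : t' - s' ∈ maximalIdeal R := Ideal.Quotient.eq.mp h
    have hz : (Ideal.Quotient.mk (Ideal.span {(p : R)}) ((t' - s') ^ p ^ N)) = 0 := by
      rw [Ideal.Quotient.eq_zero_iff_mem]
      exact Ideal.mem_span_singleton.mpr (hN _ h')
    have h2 : (Ideal.Quotient.mk (Ideal.span {(p : R)}) t') ^ p ^ N
        - (Ideal.Quotient.mk (Ideal.span {(p : R)}) s') ^ p ^ N
        = Ideal.Quotient.mk (Ideal.span {(p : R)}) ((t' - s') ^ p ^ N) := by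
      rw [← sub_pow_char_pow, ← map_sub, ← map_pow]
    exact sub_eq_zero.mp (by rw [h2, hz])
  refine ⟨?_, ?_, ?_⟩
  · -- MapsTo
    intro a ha r
    obtain ⟨y, hy⟩ := ha r
    exact ⟨Ideal.Quotient.factor (S := Ideal.span {(p : R)}) (T := maximalIdeal R) H y,
      by rw [← hy, map_pow]; rfl⟩
  · -- InjOn
    by_cases hp0 : (p : R) = 0
    · haveI : CharP R p := by rw [CharP.charP_iff_prime_eq_zero hp]; exact_mod_cast hp0
      have hπinj : Function.Injective (Ideal.Quotient.mk (Ideal.span {(p : R)})) := by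
        intro a b h
        have h1 : a - b ∈ Ideal.span {(p : R)} := Ideal.Quotient.eq.mp h
        rw [hp0, Ideal.span_singleton_eq_bot.mpr rfl] at h1
        exact sub_eq_zero.mp h1
      intro a ha b hb hab
      obtain ⟨x, rfl⟩ := Ideal.Quotient.mk_surjective a
      obtain ⟨y, rfl⟩ := Ideal.Quotient.mk_surjective b
      rw [hφmk, hφmk] at hab
      have key : ∀ n : ℕ, x - y ∈ (maximalIdeal R) ^ n := by
        intro n
        obtain ⟨c, hc⟩ := ha n
        obtain ⟨d, hd⟩ := hb n
        obtain ⟨c', rfl⟩ := Ideal.Quotient.mk_surjective c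
        obtain ⟨d', rfl⟩ := Ideal.Quotient.mk_surjective d
        have hc' : c' ^ p ^ n = x := hπinj (by rw [map_pow]; exact hc)
        have hd' : d' ^ p ^ n = y := hπinj (by rw [map_pow]; exact hd)
        have hres1 : Ideal.Quotient.mk (maximalIdeal R) c'
            = Ideal.Quotient.mk (maximalIdeal R) d' := by
          apply hFinj n
          have e1 : (Ideal.Quotient.mk (maximalIdeal R) c') ^ p ^ n
              = Ideal.Quotient.mk (maximalIdeal R) x := by rw [← map_pow, hc']
          have e2 : (Ideal.Quotient.mk (maximalIdeal R) d') ^ p ^ n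
              = Ideal.Quotient.mk (maximalIdeal R) y := by rw [← map_pow, hd']
          exact e1.trans (hab.trans e2.symm)
        have hcd : c' - d' ∈ maximalIdeal R := Ideal.Quotient.eq.mp hres1
        have heq : x - y = (c' - d') ^ p ^ n := by
          rw [sub_pow_char_pow, hc', hd']
        rw [heq]
        exact Ideal.pow_le_pow_right (Nat.le_of_lt (Nat.lt_pow_self (n := n) hp.one_lt))
          (Ideal.pow_mem_pow hcd _)
      have h0 : x - y = 0 := hcompl.toIsHausdorff.haus (x - y) (fun n => by
        rw [SModEq.zero, aux_smul_top]; exact key n)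
      rw [sub_eq_zero.mp h0]
    · obtain ⟨N, hN⟩ := hdvd hp0
      intro a ha b hb hab
      obtain ⟨y, hy⟩ := ha N
      obtain ⟨z, hz⟩ := hb N
      have hφyz := hFinj N _ _ (by rw [← map_pow, ← map_pow, hy, hz, hab] :
        (Ideal.Quotient.factor (S := Ideal.span {(p : R)}) (T := maximalIdeal R) H y) ^ p ^ N
          = (Ideal.Quotient.factor (S := Ideal.span {(p : R)}) (T := maximalIdeal R) H z) ^ p ^ N)
      rw [← hy, ← hz, KL N hN y z hφyz]
  · -- SurjOn
    intro xbar hxbar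
    choose ybar hybar using hxbar
    have hroots : ∀ s : ℕ, ybar (s + 1) ^ p = ybar s := by
      intro s
      apply hFinj s
      rw [← pow_mul, ← pow_succ', hybar, hybar]
    by_cases hp0 : (p : R) = 0
    · haveI : CharP R p := by rw [CharP.charP_iff_prime_eq_zero hp]; exact_mod_cast hp0
      choose u hu using fun s => Ideal.Quotient.mk_surjective (I := maximalIdeal R) (ybar s)
      have hstep : ∀ s, u (s + 1) ^ p - u s ∈ maximalIdeal R := by
        intro s
        rw [← Ideal.Quotient.eq_zero_iff_mem, map_sub, map_pow, hu, hu]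
        exact sub_eq_zero.mpr (hroots s)
      obtain ⟨L, hL0, hLr⟩ := aux_root hcompl u hstep
      refine ⟨Ideal.Quotient.mk _ L, fun r => ?_, ?_⟩
      · obtain ⟨w, hw⟩ := hLr r
        exact ⟨Ideal.Quotient.mk _ w, by rw [← map_pow, hw]⟩
      · rw [hφmk, Ideal.Quotient.eq.mpr hL0, hu]
        have := hybar 0
        rwa [pow_zero, pow_one] at this
    · obtain ⟨N, hN⟩ := hdvd hp0
      choose x hx using fun s => Ideal.Quotient.mk_surjective (I := maximalIdeal R) (ybar s)
      have hφu : ∀ s, Ideal.Quotient.factor (S := Ideal.span {(p : R)}) (T := maximalIdeal R) H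
          (Ideal.Quotient.mk _ (x s)) = ybar s := fun s => by rw [hφmk, hx]
      refine ⟨(Ideal.Quotient.mk _ (x N)) ^ p ^ N, fun r => ?_, ?_⟩
      · refine ⟨(Ideal.Quotient.mk _ (x (N + r))) ^ p ^ N, ?_⟩
        have hφeq : Ideal.Quotient.factor (S := Ideal.span {(p : R)}) (T := maximalIdeal R) H
            ((Ideal.Quotient.mk _ (x (N + r))) ^ p ^ r)
            = Ideal.Quotient.factor (S := Ideal.span {(p : R)}) (T := maximalIdeal R) H
            (Ideal.Quotient.mk _ (x N)) := by
          rw [map_pow, hφu, hφu]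
          apply hFinj N
          show (ybar (N + r) ^ p ^ r) ^ p ^ N = ybar N ^ p ^ N
          rw [← pow_mul, ← pow_add, Nat.add_comm r N, hybar, hybar]
        have hkl := KL N hN _ _ hφeq
        rw [← pow_mul] at hkl
        rw [← pow_mul, Nat.mul_comm]
        exact hkl
      · rw [map_pow, hφu]
        exact hybar N


/-- Lemma 2.2: Let `K` be a complete discrete valuation field whose residue field `F`
has characteristic `p > 0`, and let `k = ⋂ F^{pʳ}` be the largest perfect subfield of `F`.
Then the subring `A = ⋂ (𝒪_K/p𝒪_K)^{pʳ}` of `𝒪_K/p𝒪_K` maps bijectively onto `k` under the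
reduction map `𝒪_K/p𝒪_K → F`. -/
theorem inter_pow_frobenius_bijOn
    (K : Type*) [Field K] (vK : Valuation K (WithZero (Multiplicative ℤ)))
    (hsurj : Function.Surjective vK)
    (hcompl : IsAdicComplete (maximalIdeal vK.valuationSubring) vK.valuationSubring)
    (p : ℕ) (hp : p.Prime)
    (hres : CharP (ResidueField vK.valuationSubring) p)
    (hpm : (p : vK.valuationSubring) ∈ maximalIdeal vK.valuationSubring) :
    Set.BijOn
      (Ideal.Quotient.factor (S := Ideal.span {(p : vK.valuationSubring)})
        (T := maximalIdeal vK.valuationSubring)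
        (Ideal.span_le.mpr (Set.singleton_subset_iff.mpr hpm)))
      {x : vK.valuationSubring ⧸ Ideal.span {(p : vK.valuationSubring)} |
        ∀ r : ℕ, ∃ y, y ^ p ^ r = x}
      {x : ResidueField vK.valuationSubring | ∀ r : ℕ, ∃ y, y ^ p ^ r = x} := by
  haveI := hres
  exact aux_general vK.valuationSubring p hp hcompl
    (fun hp0 => (aux_pow_dvd vK p hp hpm hp0).imp
      (fun N hN c hc => hN N le_rfl c hc))
    (Ideal.span_le.mpr (Set.singleton_subset_iff.mpr hpm))
end

section
/- Let K be a complete discrete valuation field of characteristic p > 0 with residue field F and prime element π, and let L = K(α) be an Artin–Schreier extension where α^p − α = f ∈ K. Suppose f ∈ u·π^{−mp} + π^{−mp+1}·O_K for some integer m ≥ 1 and some u ∈ O_K whose residue class ū does not belong to F^p. Then the residue field E of L equals F(ū^{1/p}) and e(L/K) = 1. -/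
noncomputable section

open IsLocalRing Multiplicative

local notation "ℤₘ₀" => WithZero (Multiplicative ℤ)

variable {K L : Type*} [Field K] [Field L] [Algebra K L]

/-- The ring homomorphism between valuation rings induced by an extension of valued fields
whose ramification index is `e`. -/
def VIntHom (vK : Valuation K ℤₘ₀) (vL : Valuation L ℤₘ₀) (e : ℕ)
    (h : ∀ x : K, vL (algebraMap K L x) = vK x ^ e) :
    vK.valuationSubring →+* vL.valuationSubring :=
  RingHom.codRestrict ((algebraMap K L).comp vK.valuationSubring.subtype)
    vL.valuationSubring.toSubring
    (fun x => by
      have hx : vK (x : K) ≤ 1 := x.2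
      show vL (algebraMap K L (x : K)) ≤ 1
      rw [h]
      exact pow_le_one' hx e)

theorem VIntHom_isLocalHom (vK : Valuation K ℤₘ₀) (vL : Valuation L ℤₘ₀) (e : ℕ) (he : 0 < e)
    (h : ∀ x : K, vL (algebraMap K L x) = vK x ^ e) :
    IsLocalHom (VIntHom vK vL e h) := by
  constructor
  intro a ha
  obtain ⟨u, hu⟩ := ha
  have hx : vL ((u : vL.valuationSubring) : L) ≤ 1 := (u : vL.valuationSubring).2
  have hx' : vL (((u⁻¹ : _) : vL.valuationSubring) : L) ≤ 1 := ((u⁻¹ : _) : vL.valuationSubring).2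
  have hmul : ((u : vL.valuationSubring) : L) * (((u⁻¹ : _) : vL.valuationSubring) : L) = 1 := by
    rw [← Subring.coe_mul]
    norm_cast
    simp
  have h1 : vL ((u : vL.valuationSubring) : L) = 1 := by
    refine le_antisymm hx ?_
    have hh := map_mul vL ((u : vL.valuationSubring) : L) (((u⁻¹ : _) : vL.valuationSubring) : L)
    rw [hmul, map_one] at hh
    calc (1 : ℤₘ₀) = vL ((u : vL.valuationSubring) : L) * vL (((u⁻¹ : _) : vL.valuationSubring) : L) := hh
      _ ≤ vL ((u : vL.valuationSubring) : L) * 1 := mul_le_mul_right hx' _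
      _ = vL ((u : vL.valuationSubring) : L) := mul_one _
  have h2 : vL (algebraMap K L (a : K)) = 1 := by
    rw [hu] at h1
    exact h1
  have hKa : vK (a : K) = 1 := by
    rw [h] at h2
    by_contra hne
    have hlt : vK (a : K) < 1 := lt_of_le_of_ne a.2 hne
    have : vK (a : K) ^ e < 1 := pow_lt_one' hlt he.ne'
    rw [h2] at this
    exact lt_irrefl _ this
  have hne : (a : K) ≠ 0 := by
    intro h0
    rw [h0, map_zero] at hKa
    exact zero_ne_one hKa
  refine IsUnit.of_mul_eq_one (a := a) ⟨(a : K)⁻¹, ?_⟩ (Subtype.ext ?_)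
  · show vK (a : K)⁻¹ ≤ 1
    rw [map_inv₀, hKa, inv_one]
  · show ((a : K) * (a : K)⁻¹ : K) = 1
    exact mul_inv_cancel₀ hne

/-- The induced homomorphism between residue fields of an extension of valued fields. -/
def ResHom (vK : Valuation K ℤₘ₀) (vL : Valuation L ℤₘ₀) (e : ℕ) (he : 0 < e)
    (h : ∀ x : K, vL (algebraMap K L x) = vK x ^ e) :
    ResidueField vK.valuationSubring →+* ResidueField vL.valuationSubring :=
  haveI : IsLocalHom (VIntHom vK vL e h) := VIntHom_isLocalHom vK vL e he h
  IsLocalRing.ResidueField.map (VIntHom vK vL e h)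

section Helpers

open Multiplicative

lemma zm_pow (a : ℤ) (n : ℕ) :
    ((ofAdd a : Multiplicative ℤ) : ℤₘ₀) ^ n = ((ofAdd ((n : ℤ) * a) : Multiplicative ℤ) : ℤₘ₀) := by
  rw [← WithZero.coe_pow, ← ofAdd_nsmul, nsmul_eq_mul]

lemma zm_zpow (a n : ℤ) :
    ((ofAdd a : Multiplicative ℤ) : ℤₘ₀) ^ n = ((ofAdd (n * a) : Multiplicative ℤ) : ℤₘ₀) := by
  rw [← WithZero.coe_zpow, ← ofAdd_zsmul, smul_eq_mul]

lemma zm_mul (a b : ℤ) :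
    ((ofAdd a : Multiplicative ℤ) : ℤₘ₀) * ((ofAdd b : Multiplicative ℤ) : ℤₘ₀) =
      ((ofAdd (a + b) : Multiplicative ℤ) : ℤₘ₀) := by
  rw [← WithZero.coe_mul, ← ofAdd_add]

lemma zm_inj {a b : ℤ} :
    ((ofAdd a : Multiplicative ℤ) : ℤₘ₀) = ((ofAdd b : Multiplicative ℤ) : ℤₘ₀) ↔ a = b := by
  rw [WithZero.coe_inj]; exact Multiplicative.ofAdd.apply_eq_iff_eq

lemma zm_lt {a b : ℤ} :
    ((ofAdd a : Multiplicative ℤ) : ℤₘ₀) < ((ofAdd b : Multiplicative ℤ) : ℤₘ₀) ↔ a < b := by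
  rw [WithZero.coe_lt_coe]; exact Multiplicative.ofAdd_lt

lemma zm_le {a b : ℤ} :
    ((ofAdd a : Multiplicative ℤ) : ℤₘ₀) ≤ ((ofAdd b : Multiplicative ℤ) : ℤₘ₀) ↔ a ≤ b := by
  rw [WithZero.coe_le_coe]; exact Multiplicative.ofAdd_le

lemma zm_one : (1 : ℤₘ₀) = ((ofAdd (0 : ℤ) : Multiplicative ℤ) : ℤₘ₀) := rfl

lemma val_one_of_isUnit {K : Type*} [Field K] {v : Valuation K ℤₘ₀}
    {x : v.valuationSubring} (h : IsUnit x) : v (x : K) = 1 := by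
  obtain ⟨w, hw⟩ := h
  have h1 : ((w : v.valuationSubring) : K) * (((w⁻¹ : _) : v.valuationSubring) : K) = 1 := by
    rw [← Subring.coe_mul]; norm_cast; simp
  have h2 := congrArg v h1
  rw [map_mul, map_one] at h2
  have hx : v ((w : v.valuationSubring) : K) ≤ 1 := (w : v.valuationSubring).2
  have hx' : v (((w⁻¹ : _) : v.valuationSubring) : K) ≤ 1 := ((w⁻¹ : _) : v.valuationSubring).2
  have : v ((w : v.valuationSubring) : K) = 1 := by
    refine le_antisymm hx ?_
    calc (1 : ℤₘ₀) = _ := h2.symm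
      _ ≤ v ((w : v.valuationSubring) : K) * 1 := mul_le_mul_right hx' _
      _ = _ := mul_one _
  rw [hw] at this; exact this

lemma isUnit_of_residue_ne {K : Type*} [Field K] {v : Valuation K ℤₘ₀}
    {x : v.valuationSubring} (h : IsLocalRing.residue _ x ≠ 0) : IsUnit x := by
  by_contra hx
  exact h ((IsLocalRing.residue_eq_zero_iff _).mpr ((IsLocalRing.mem_maximalIdeal _).mpr hx))

lemma residue_eq_zero_of_val_lt {K : Type*} [Field K] {v : Valuation K ℤₘ₀}
    {x : v.valuationSubring} (h : v (x : K) < 1) : IsLocalRing.residue _ x = 0 := by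
  by_contra hres
  exact absurd (val_one_of_isUnit (isUnit_of_residue_ne hres)) h.ne

end Helpers


set_option maxHeartbeats 1000000 in
/-- Lemma 2.3 (3): Let `K` be a complete discrete valuation field of characteristic `p > 0`
with prime element `π`, and `L = K(α)` the Artin–Schreier extension given by
`α ^ p - α = f` with `f ∈ u π^{-mp} + π^{-mp+1} 𝒪_K`, where `m ≥ 1` and `u ∈ 𝒪_K` has
residue class `ū ∉ F^p`.  Then the residue field of `L` equals `F(ū^{1/p})` and `e(L/K) = 1`. -/
theorem artinSchreier_ferocious
    (p : ℕ) (hp : p.Prime)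
    (K : Type*) [Field K] [CharP K p] (vK : Valuation K ℤₘ₀)
    (hsurjK : Function.Surjective vK)
    (hcompl : IsAdicComplete (maximalIdeal vK.valuationSubring) vK.valuationSubring)
    (L : Type*) [Field L] [Algebra K L] (vL : Valuation L ℤₘ₀)
    (hsurjL : Function.Surjective vL)
    (e : ℕ) (he : 0 < e) (hcomp : ∀ x : K, vL (algebraMap K L x) = vK x ^ e)
    (π : K) (hπ : vK π = ((ofAdd (-1 : ℤ) : Multiplicative ℤ) : ℤₘ₀))
    (m : ℕ) (hm : 1 ≤ m)
    (u : vK.valuationSubring)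
    (hu : ¬ ∃ y : ResidueField vK.valuationSubring,
      y ^ p = residue vK.valuationSubring u)
    (f : K)
    (hf : ∃ c : K, vK c ≤ 1 ∧
      f = (u : K) * π ^ (-(m * p : ℤ)) + π ^ (-(m * p : ℤ) + 1) * c)
    (α : L) (hα : α ^ p - α = algebraMap K L f)
    (hgen : IntermediateField.adjoin K {α} = ⊤) :
    (∃ β : ResidueField vL.valuationSubring,
        β ^ p = ResHom vK vL e he hcomp (residue vK.valuationSubring u) ∧
        Subfield.closure (Set.range (ResHom vK vL e he hcomp) ∪ {β}) = ⊤) ∧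
      e = 1 := by
  classical
  obtain ⟨c, hc1, hfe⟩ := hf
  set ι := VIntHom vK vL e hcomp with hι
  haveI : IsLocalHom ι := VIntHom_isLocalHom vK vL e he hcomp
  set φ := ResHom vK vL e he hcomp with hφ
  have hφres : ∀ x : vK.valuationSubring,
      residue vL.valuationSubring (ι x) = φ (residue vK.valuationSubring x) := fun x =>
    (IsLocalRing.ResidueField.map_residue ι x).symm
  have hιcoe : ∀ x : vK.valuationSubring,
      ((ι x : vL.valuationSubring) : L) = algebraMap K L (x : K) := fun x => rfl
  have hp2 : 2 ≤ p := hp.two_le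
  have he1 : (1 : ℤ) ≤ e := by exact_mod_cast he
  have hm1 : (1 : ℤ) ≤ m := by exact_mod_cast hm
  have hp2' : (2 : ℤ) ≤ p := by exact_mod_cast hp2
  have hmp2 : (2 : ℤ) ≤ (m : ℤ) * p := by
    calc (2 : ℤ) ≤ (p : ℤ) := hp2'
      _ = 1 * p := (one_mul _).symm
      _ ≤ (m : ℤ) * p := mul_le_mul_of_nonneg_right hm1 (by linarith)
  have hemp2 : (2 : ℤ) ≤ (e : ℤ) * ((m : ℤ) * p) := by
    calc (2 : ℤ) ≤ (m : ℤ) * p := hmp2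
      _ = 1 * ((m : ℤ) * p) := (one_mul _).symm
      _ ≤ (e : ℤ) * ((m : ℤ) * p) := mul_le_mul_of_nonneg_right he1 (by linarith)
  have hem1 : (1 : ℤ) ≤ (e : ℤ) * m := by
    calc (1 : ℤ) ≤ (m : ℤ) := hm1
      _ = 1 * m := (one_mul _).symm
      _ ≤ (e : ℤ) * m := mul_le_mul_of_nonneg_right he1 (by linarith)
  have hπ0 : π ≠ 0 := by
    intro h0
    rw [h0, map_zero] at hπ
    exact (WithZero.coe_ne_zero hπ.symm)
  have hπL0 : algebraMap K L π ≠ 0 :=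
    fun h => hπ0 ((algebraMap K L).injective (by rw [h, map_zero]))
  -- value of u
  have hresu : residue vK.valuationSubring u ≠ 0 := by
    intro h0
    exact hu ⟨0, by rw [zero_pow hp.ne_zero, h0]⟩
  have hvu : vK (u : K) = 1 := val_one_of_isUnit (isUnit_of_residue_ne hresu)
  -- value of powers of π
  have hπz : ∀ n : ℤ, vK (π ^ n) = ((ofAdd (-n) : Multiplicative ℤ) : ℤₘ₀) := by
    intro n
    rw [map_zpow₀, hπ, zm_zpow, zm_inj]
    ring
  -- value of f
  have hvf : vK f = ((ofAdd ((m : ℤ) * p) : Multiplicative ℤ) : ℤₘ₀) := by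
    have h1 : vK ((u : K) * π ^ (-(m * p : ℤ))) =
        ((ofAdd ((m : ℤ) * p) : Multiplicative ℤ) : ℤₘ₀) := by
      rw [map_mul, hvu, one_mul, hπz, zm_inj]
      ring
    have h2 : vK (π ^ (-(m * p : ℤ) + 1) * c) ≤
        ((ofAdd ((m : ℤ) * p - 1) : Multiplicative ℤ) : ℤₘ₀) := by
      rw [map_mul, hπz]
      have hx : ((ofAdd (-(-(m * p : ℤ) + 1)) : Multiplicative ℤ) : ℤₘ₀) =
          ((ofAdd ((m : ℤ) * p - 1) : Multiplicative ℤ) : ℤₘ₀) := by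
        rw [zm_inj]; ring
      rw [hx]
      calc ((ofAdd ((m : ℤ) * p - 1) : Multiplicative ℤ) : ℤₘ₀) * vK c
          ≤ ((ofAdd ((m : ℤ) * p - 1) : Multiplicative ℤ) : ℤₘ₀) * 1 := mul_le_mul_right hc1 _
        _ = _ := mul_one _
    have hlt : vK (π ^ (-(m * p : ℤ) + 1) * c) < vK ((u : K) * π ^ (-(m * p : ℤ))) := by
      rw [h1]
      exact lt_of_le_of_lt h2 (zm_lt.mpr (by omega))
    rw [hfe, Valuation.map_add_eq_of_lt_left _ hlt, h1]
  have hvfL : vL (algebraMap K L f) =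
      ((ofAdd ((e : ℤ) * ((m : ℤ) * p)) : Multiplicative ℤ) : ℤₘ₀) := by
    rw [hcomp, hvf, zm_pow]
  -- value of α
  have hα' : α ^ p = algebraMap K L f + α := by
    rw [← hα]; ring
  have hα0 : α ≠ 0 := by
    intro h0
    have hf0 : algebraMap K L f = 0 := by
      rw [← hα, h0, zero_pow hp.ne_zero, sub_zero]
    rw [hf0, map_zero] at hvfL
    exact WithZero.coe_ne_zero hvfL.symm
  have hA0 : vL α ≠ 0 := fun h => hα0 ((Valuation.zero_iff vL).mp h)
  obtain ⟨g, hg⟩ : ∃ g : Multiplicative ℤ, (g : ℤₘ₀) = vL α :=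
    ⟨WithZero.unzero hA0, WithZero.coe_unzero hA0⟩
  set az : ℤ := toAdd g with haz
  have hgaz : vL α = ((ofAdd az : Multiplicative ℤ) : ℤₘ₀) := by
    rw [← hg, haz, ofAdd_toAdd]
  have hmain_eq : vL (α ^ p) = vL (algebraMap K L f + α) := by rw [hα']
  have hA : vL α = ((ofAdd ((e : ℤ) * m) : Multiplicative ℤ) : ℤₘ₀) := by
    rcases lt_trichotomy az ((e : ℤ) * ((m : ℤ) * p)) with hlt | heq | hgt
    · have hlt' : vL α < vL (algebraMap K L f) := by
        rw [hgaz, hvfL]; exact zm_lt.mpr hlt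
      rw [Valuation.map_add_eq_of_lt_left _ hlt', map_pow, hgaz, hvfL, zm_pow, zm_inj] at hmain_eq
      rw [hgaz, zm_inj]
      have hpne : (p : ℤ) ≠ 0 := by positivity
      apply mul_left_cancel₀ hpne
      rw [hmain_eq]; ring
    · exfalso
      have h1 : vL (α ^ p) = ((ofAdd ((p : ℤ) * az) : Multiplicative ℤ) : ℤₘ₀) := by
        rw [map_pow, hgaz, zm_pow]
      have h2 : vL (algebraMap K L f + α) ≤ ((ofAdd az : Multiplicative ℤ) : ℤₘ₀) := by
        refine le_trans (Valuation.map_add _ _ _) ?_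
        rw [hvfL, hgaz, ← heq]
        simp
      rw [h1] at hmain_eq
      have h3 := hmain_eq.le.trans h2
      rw [zm_le] at h3
      have haz2 : (2 : ℤ) ≤ az := by rw [heq]; exact hemp2
      nlinarith [mul_le_mul_of_nonneg_right hp2' (show (0 : ℤ) ≤ az by linarith)]
    · exfalso
      have hlt' : vL (algebraMap K L f) < vL α := by
        rw [hgaz, hvfL]; exact zm_lt.mpr hgt
      rw [Valuation.map_add_eq_of_lt_right _ hlt', map_pow, hgaz, zm_pow, zm_inj] at hmain_eq
      have haz2 : (2 : ℤ) ≤ az := by linarith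
      nlinarith [mul_le_mul_of_nonneg_right hp2' (show (0 : ℤ) ≤ az by linarith)]
  -- the unit T
  set T : L := α * (algebraMap K L π) ^ m with hT
  have hvπL : vL (algebraMap K L π) = ((ofAdd (-(e : ℤ)) : Multiplicative ℤ) : ℤₘ₀) := by
    rw [hcomp, hπ, zm_pow, zm_inj]; ring
  have hvT : vL T = 1 := by
    rw [hT, map_mul, map_pow, hA, hvπL, zm_pow, zm_mul, zm_one, zm_inj]
    ring
  set τ : vL.valuationSubring := ⟨T, by rw [Valuation.mem_valuationSubring_iff, hvT]⟩ with hτ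
  have hτcoe : (τ : L) = T := rfl
  set β := residue vL.valuationSubring τ with hβ
  -- β ^ p = φ ū
  have hfK : f * π ^ (m * p : ℕ) = (u : K) + π * c := by
    have hn1 : π ^ (-(m * p : ℤ)) * π ^ ((m * p : ℕ) : ℤ) = 1 := by
      rw [← zpow_add₀ hπ0]
      norm_num
    have hn2 : π ^ (-(m * p : ℤ) + 1) * π ^ ((m * p : ℕ) : ℤ) = π := by
      rw [← zpow_add₀ hπ0]
      have hx : (-(m * p : ℤ) + 1) + ((m * p : ℕ) : ℤ) = 1 := by push_cast; ring
      rw [hx, zpow_one]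
    calc f * π ^ (m * p : ℕ)
        = (u : K) * (π ^ (-(m * p : ℤ)) * π ^ ((m * p : ℕ) : ℤ)) +
            (π ^ (-(m * p : ℤ) + 1) * π ^ ((m * p : ℕ) : ℤ)) * c := by
          rw [hfe, zpow_natCast]; ring
      _ = (u : K) + π * c := by rw [hn1, hn2]; ring
  have hTp : T ^ p - algebraMap K L (u : K) =
      α * (algebraMap K L π) ^ (m * p) + algebraMap K L (π * c) := by
    have h1 : T ^ p = (algebraMap K L f + α) * (algebraMap K L π) ^ (m * p) := by
      rw [hT, mul_pow, hα', ← pow_mul]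
    have h2 : algebraMap K L f * (algebraMap K L π) ^ (m * p) =
        algebraMap K L (u : K) + algebraMap K L (π * c) := by
      rw [← map_pow, ← map_mul, hfK, map_add]
    calc T ^ p - algebraMap K L (u : K)
        = algebraMap K L f * (algebraMap K L π) ^ (m * p) +
            α * (algebraMap K L π) ^ (m * p) - algebraMap K L (u : K) := by rw [h1]; ring
      _ = α * (algebraMap K L π) ^ (m * p) + algebraMap K L (π * c) := by rw [h2]; ring
  have hvTpu : vL (T ^ p - algebraMap K L (u : K)) < 1 := by
    rw [hTp]
    refine lt_of_le_of_lt (Valuation.map_add _ _ _) (max_lt ?_ ?_)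
    · rw [map_mul, map_pow, hA, hvπL, zm_pow, zm_mul, zm_one, zm_lt]
      push_cast
      nlinarith [mul_le_mul_of_nonneg_left hp2' (show (0 : ℤ) ≤ (e : ℤ) * m by linarith)]
    · rw [hcomp, map_mul, hπ]
      have hle : ((ofAdd (-1 : ℤ) : Multiplicative ℤ) : ℤₘ₀) * vK c ≤
          ((ofAdd (-1 : ℤ) : Multiplicative ℤ) : ℤₘ₀) := by
        calc ((ofAdd (-1 : ℤ) : Multiplicative ℤ) : ℤₘ₀) * vK c
            ≤ ((ofAdd (-1 : ℤ) : Multiplicative ℤ) : ℤₘ₀) * 1 := mul_le_mul_right hc1 _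
          _ = _ := mul_one _
      calc (((ofAdd (-1 : ℤ) : Multiplicative ℤ) : ℤₘ₀) * vK c) ^ e
          ≤ (((ofAdd (-1 : ℤ) : Multiplicative ℤ) : ℤₘ₀)) ^ e := pow_le_pow_left' hle e
        _ = ((ofAdd (-(e : ℤ)) : Multiplicative ℤ) : ℤₘ₀) := by rw [zm_pow, zm_inj]; ring
        _ < 1 := by rw [zm_one, zm_lt]; omega
  have hβp : β ^ p = φ (residue vK.valuationSubring u) := by
    have hcoe : ((τ ^ p - ι u : vL.valuationSubring) : L) = T ^ p - algebraMap K L (u : K) := by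
      push_cast [hιcoe, hτcoe]
      ring
    have h0 : residue vL.valuationSubring (τ ^ p - ι u) = 0 := by
      apply residue_eq_zero_of_val_lt
      rw [hcoe]
      exact hvTpu
    rw [map_sub, map_pow, hφres] at h0
    rw [hβ]
    linear_combination h0
  -- linear independence over the residue field
  letI : Algebra (ResidueField vK.valuationSubring) (ResidueField vL.valuationSubring) :=
    φ.toAlgebra
  have halg : ∀ r : ResidueField vK.valuationSubring,
      algebraMap (ResidueField vK.valuationSubring) (ResidueField vL.valuationSubring) r = φ r :=
    fun _ => rfl
  have hroot : (Polynomial.aeval β)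
      ((Polynomial.X : Polynomial (ResidueField vK.valuationSubring)) ^ p -
        Polynomial.C (residue vK.valuationSubring u)) = 0 := by
    rw [map_sub, map_pow, Polynomial.aeval_X, Polynomial.aeval_C, halg, hβp, sub_self]
  have hirr : Irreducible ((Polynomial.X : Polynomial (ResidueField vK.valuationSubring)) ^ p -
      Polynomial.C (residue vK.valuationSubring u)) := by
    refine X_pow_sub_C_irreducible_of_prime hp ?_
    intro b hb
    exact hu ⟨b, hb⟩
  have hminpoly : minpoly (ResidueField vK.valuationSubring) β =
      (Polynomial.X : Polynomial (ResidueField vK.valuationSubring)) ^ p -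
        Polynomial.C (residue vK.valuationSubring u) :=
    (minpoly.eq_of_irreducible_of_monic hirr hroot (Polynomial.monic_X_pow_sub_C _ hp.ne_zero)).symm
  have hdeg : (minpoly (ResidueField vK.valuationSubring) β).natDegree = p := by
    rw [hminpoly, Polynomial.natDegree_X_pow_sub_C]
  have hli : LinearIndependent (ResidueField vK.valuationSubring)
      fun i : Fin p => β ^ (i : ℕ) := by
    have h := linearIndependent_pow (K := ResidueField vK.valuationSubring) β
    rwa [hdeg] at h
  have hind : ∀ r : Fin p → ResidueField vK.valuationSubring,
      (∑ i : Fin p, φ (r i) * β ^ (i : ℕ)) = 0 → ∀ i, r i = 0 := by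
    intro r hr
    refine Fintype.linearIndependent_iff.mp hli r ?_
    rw [← hr]
    refine Finset.sum_congr rfl fun i _ => ?_
    rw [Algebra.smul_def, halg]
  -- coercion and residue of sums
  have hsumcoe : ∀ a : Fin p → vK.valuationSubring,
      ((∑ i : Fin p, ι (a i) * τ ^ (i : ℕ) : vL.valuationSubring) : L) =
        ∑ i : Fin p, algebraMap K L ((a i : K)) * T ^ (i : ℕ) := by
    intro a
    rw [show ((∑ i : Fin p, ι (a i) * τ ^ (i : ℕ) : vL.valuationSubring) : L) =
      vL.valuationSubring.subtype (∑ i : Fin p, ι (a i) * τ ^ (i : ℕ)) from rfl, map_sum]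
    exact Finset.sum_congr rfl fun i _ => by rw [map_mul, map_pow]; rfl
  have hsumres : ∀ a : Fin p → vK.valuationSubring,
      residue vL.valuationSubring (∑ i : Fin p, ι (a i) * τ ^ (i : ℕ)) =
        ∑ i : Fin p, φ (residue vK.valuationSubring (a i)) * β ^ (i : ℕ) := by
    intro a
    rw [map_sum]
    exact Finset.sum_congr rfl fun i _ => by rw [map_mul, map_pow, hφres, hβ]
  have hclaim1 : ∀ a : Fin p → vK.valuationSubring,
      (∃ j, residue vK.valuationSubring (a j) ≠ 0) →
      vL (∑ i : Fin p, algebraMap K L ((a i : K)) * T ^ (i : ℕ)) = 1 := by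
    intro a ⟨j, hj⟩
    have hne : residue vL.valuationSubring (∑ i : Fin p, ι (a i) * τ ^ (i : ℕ)) ≠ 0 := by
      rw [hsumres]
      intro h0
      exact hj (hind _ h0 j)
    have h := val_one_of_isUnit (isUnit_of_residue_ne hne)
    rwa [hsumcoe] at h
  -- the workhorse
  have hmain : ∀ b : Fin p → K, (∃ j, b j ≠ 0) →
      ∃ dz : ℤ, (∀ i, vK (b i) ≤ ((ofAdd dz : Multiplicative ℤ) : ℤₘ₀)) ∧
        vL (∑ i : Fin p, algebraMap K L (b i) * T ^ (i : ℕ)) =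
          ((ofAdd ((e : ℤ) * dz) : Multiplicative ℤ) : ℤₘ₀) := by
    intro b ⟨j, hj⟩
    obtain ⟨j0, _, hmax⟩ := Finset.exists_max_image Finset.univ (fun i => vK (b i))
      ⟨j, Finset.mem_univ j⟩
    set d := b j0 with hd
    have hd0 : d ≠ 0 := by
      intro h0
      have hh := hmax j (Finset.mem_univ j)
      rw [h0, map_zero, le_zero_iff, Valuation.zero_iff] at hh
      exact hj hh
    have hvd0 : vK d ≠ 0 := fun h => hd0 ((Valuation.zero_iff vK).mp h)
    obtain ⟨gd, hgd⟩ : ∃ gd : Multiplicative ℤ, (gd : ℤₘ₀) = vK d :=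
      ⟨WithZero.unzero hvd0, WithZero.coe_unzero hvd0⟩
    refine ⟨toAdd gd, ?_, ?_⟩
    · intro i
      rw [ofAdd_toAdd, hgd]
      exact hmax i (Finset.mem_univ i)
    · set a : Fin p → vK.valuationSubring := fun i =>
        ⟨b i / d, by
          rw [Valuation.mem_valuationSubring_iff, map_div₀,
            div_le_one₀ (zero_lt_iff.mpr hvd0)]
          exact hmax i (Finset.mem_univ i)⟩ with ha
      have haj0 : a j0 = 1 := by
        apply Subtype.ext
        show d / d = (1 : K)
        exact div_self hd0
      have hsum : (∑ i : Fin p, algebraMap K L (b i) * T ^ (i : ℕ)) =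
          algebraMap K L d * ∑ i : Fin p, algebraMap K L ((a i : K)) * T ^ (i : ℕ) := by
        rw [Finset.mul_sum]
        refine Finset.sum_congr rfl fun i _ => ?_
        rw [← mul_assoc, ← map_mul]
        congr 2
        show b i = d * (b i / d)
        rw [mul_comm, div_mul_cancel₀ _ hd0]
      have hva : vL (∑ i : Fin p, algebraMap K L ((a i : K)) * T ^ (i : ℕ)) = 1 := by
        refine hclaim1 a ⟨j0, ?_⟩
        rw [haj0, map_one]
        exact one_ne_zero
      rw [hsum, map_mul, hva, mul_one, hcomp, ← hgd, ← ofAdd_toAdd gd, zm_pow, toAdd_ofAdd]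
  -- representation of elements of L
  have hQm : ((Polynomial.X : Polynomial K) ^ p - (Polynomial.X + Polynomial.C f)).Monic :=
    Polynomial.monic_X_pow_sub (by
      rw [Polynomial.degree_X_add_C]
      exact_mod_cast hp.one_lt)
  have hadj : Algebra.adjoin K {α} = ⊤ := by
    have hint : IsIntegral K α := by
      refine ⟨(Polynomial.X : Polynomial K) ^ p - (Polynomial.X + Polynomial.C f), hQm, ?_⟩
      rw [Polynomial.eval₂_sub, Polynomial.eval₂_add, Polynomial.eval₂_pow,
        Polynomial.eval₂_X, Polynomial.eval₂_C]
      linear_combination hα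
    rw [← IntermediateField.adjoin_simple_toSubalgebra_of_isAlgebraic hint.isAlgebraic,
      show IntermediateField.adjoin K {α} = ⊤ from hgen]
    exact IntermediateField.top_toSubalgebra
  have hrep : ∀ y : L, ∃ b : Fin p → K,
      y = ∑ i : Fin p, algebraMap K L (b i) * T ^ (i : ℕ) := by
    intro y
    have hy : y ∈ Algebra.adjoin K {α} := by rw [hadj]; trivial
    rw [Algebra.adjoin_singleton_eq_range_aeval] at hy
    obtain ⟨q, hq⟩ := hy
    set Q : Polynomial K := (Polynomial.X : Polynomial K) ^ p -
      (Polynomial.X + Polynomial.C f) with hQ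
    have hQdeg : Q.degree = p := by
      rw [hQ, Polynomial.degree_sub_eq_left_of_degree_lt, Polynomial.degree_X_pow]
      rw [Polynomial.degree_X_add_C, Polynomial.degree_X_pow]
      exact_mod_cast hp.one_lt
    have hQroot : Polynomial.aeval α Q = 0 := by
      rw [hQ, map_sub, map_add, map_pow, Polynomial.aeval_X, Polynomial.aeval_C]
      linear_combination hα
    set r := q %ₘ Q with hr
    have hry : Polynomial.aeval α r = y := by
      have h2 : Polynomial.aeval α (q %ₘ Q + Q * (q /ₘ Q)) = Polynomial.aeval α q := by
        rw [Polynomial.modByMonic_add_div q Q]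
      simp only [map_add, map_mul, hQroot, zero_mul, add_zero] at h2
      rw [hr]
      exact h2.trans hq
    have hrdeg : r.natDegree < p := by
      rcases eq_or_ne r 0 with h0 | h0
      · rw [h0, Polynomial.natDegree_zero]; exact hp.pos
      · rw [Polynomial.natDegree_lt_iff_degree_lt h0, ← hQdeg]
        exact Polynomial.degree_modByMonic_lt q hQm
    refine ⟨fun i => r.coeff i / π ^ (m * (i : ℕ)), ?_⟩
    rw [← hry, Polynomial.aeval_eq_sum_range' hrdeg, ← Fin.sum_univ_eq_sum_range]
    refine Finset.sum_congr rfl fun i _ => ?_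
    have hX : algebraMap K L (π ^ (m * (i : ℕ))) ≠ 0 := by
      rw [map_pow]
      exact pow_ne_zero _ hπL0
    have hgoal : algebraMap K L (r.coeff i / π ^ (m * (i : ℕ))) * T ^ (i : ℕ) =
        r.coeff i • α ^ (i : ℕ) := by
      rw [Algebra.smul_def, map_div₀, hT, mul_pow, ← pow_mul, ← map_pow]
      field_simp
    exact hgoal.symm
  -- e = 1
  have heone : e = 1 := by
    obtain ⟨y, hy⟩ := hsurjL ((ofAdd (-1 : ℤ) : Multiplicative ℤ) : ℤₘ₀)
    obtain ⟨b, hb⟩ := hrep y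
    have hbne : ∃ j, b j ≠ 0 := by
      by_contra hball
      push_neg at hball
      have hy0 : y = 0 := by
        rw [hb]
        refine Finset.sum_eq_zero fun i _ => ?_
        rw [hball i, map_zero, zero_mul]
      rw [hy0, map_zero] at hy
      exact WithZero.coe_ne_zero hy.symm
    obtain ⟨dz, _, hval⟩ := hmain b hbne
    rw [← hb, hy] at hval
    have hh : (-1 : ℤ) = (e : ℤ) * dz := zm_inj.mp hval
    have h1 : ((e : ℤ) * dz).natAbs = 1 := by rw [← hh]; rfl
    rw [Int.natAbs_mul, Int.natAbs_natCast] at h1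
    exact Nat.eq_one_of_mul_eq_one_right h1
  refine ⟨⟨β, hβp, ?_⟩, heone⟩
  -- closure is everything
  rw [eq_top_iff]
  intro ξ _
  obtain ⟨w, hw⟩ := Ideal.Quotient.mk_surjective (I := maximalIdeal vL.valuationSubring) ξ
  obtain ⟨b, hb⟩ := hrep (w : L)
  rcases eq_or_ne w 0 with h0 | h0
  · rw [h0, map_zero] at hw
    rw [← hw]
    exact zero_mem _
  have hbne : ∃ j, b j ≠ 0 := by
    by_contra hball
    push_neg at hball
    apply h0
    have hzero : ((w : vL.valuationSubring) : L) = 0 := by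
      rw [hb]
      exact Finset.sum_eq_zero fun i _ => by rw [hball i, map_zero, zero_mul]
    exact Subtype.ext (by rw [hzero]; simp)
  obtain ⟨dz, hbound, hval⟩ := hmain b hbne
  have hw1 : vL (w : L) ≤ 1 := w.2
  have hdz : dz ≤ 0 := by
    rw [hb, hval, zm_one, zm_le] at hw1
    by_contra hcon
    push_neg at hcon
    have := mul_le_mul_of_nonneg_right he1 (le_of_lt hcon)
    nlinarith
  have hble : ∀ i, vK (b i) ≤ 1 := fun i =>
    le_trans (hbound i) (by rw [zm_one, zm_le]; exact hdz)
  set a : Fin p → vK.valuationSubring := fun i =>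
    ⟨b i, by rw [Valuation.mem_valuationSubring_iff]; exact hble i⟩ with ha
  have hwa : w = ∑ i : Fin p, ι (a i) * τ ^ (i : ℕ) := by
    apply Subtype.ext
    rw [hsumcoe a]
    exact hb
  have hξ : ξ = ∑ i : Fin p, φ (residue vK.valuationSubring (a i)) * β ^ (i : ℕ) := by
    rw [← hsumres a, ← hwa]
    exact hw.symm
  rw [hξ]
  refine Subfield.sum_mem _ fun i _ => ?_
  refine Subfield.mul_mem _ ?_ (Subfield.pow_mem _ ?_ _)
  · exact Subfield.subset_closure (Or.inl ⟨_, rfl⟩)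
  · exact Subfield.subset_closure (Or.inr rfl)
end
end

section
/- Let K be a complete discrete valuation field of mixed characteristic (0, p) containing a primitive p-th root of unity ζ_p, with residue field F and prime element π. Let L = K(α) be a Kummer extension with α^p = a ∈ K^×. Suppose a ∈ (1 + π^n·u)·(1 + π^{n+1}·O_K) for some integer n not divisible by p with 1 ≤ n < e_K·p/(p − 1) and some u ∈ O_K^×. Then e(L/K) = p and the residue field E of L equals F. -/
noncomputable section

open IsLocalRing Multiplicative

notation "ℤₘ₀" => WithZero (Multiplicative ℤ)

variable {K L : Type*} [Field K] [Field L] [Algebra K L]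

lemma zpow_lem (a : ℤ) (n : ℕ) : ((ofAdd a : Multiplicative ℤ) : ℤₘ₀) ^ n = ofAdd ((n:ℤ) * a) := by
  rw [← WithZero.coe_pow]; congr 1

lemma zle_lem {a b : ℤ} : ((ofAdd a : Multiplicative ℤ) : ℤₘ₀) ≤ ofAdd b ↔ a ≤ b := by
  rw [WithZero.coe_le_coe, Multiplicative.ofAdd_le]

lemma zlt_lem {a b : ℤ} : ((ofAdd a : Multiplicative ℤ) : ℤₘ₀) < ofAdd b ↔ a < b := by
  rw [WithZero.coe_lt_coe, Multiplicative.ofAdd_lt]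

lemma zeq_lem {a b : ℤ} : ((ofAdd a : Multiplicative ℤ) : ℤₘ₀) = ofAdd b ↔ a = b := by
  rw [WithZero.coe_inj, EmbeddingLike.apply_eq_iff_eq]

lemma zmul_lem (a b : ℤ) : ((ofAdd a : Multiplicative ℤ) : ℤₘ₀) * ofAdd b = ofAdd (a+b) := by
  rw [← WithZero.coe_mul, ← ofAdd_add]

lemma zone_lem : ((ofAdd (0:ℤ) : Multiplicative ℤ) : ℤₘ₀) = 1 := rfl

lemma zlt_one_lem {a : ℤ} (h : a < 0) : ((ofAdd a : Multiplicative ℤ) : ℤₘ₀) < 1 := by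
  rw [← zone_lem]; exact zlt_lem.mpr h

lemma zle_one_lem {a : ℤ} (h : a ≤ 0) : ((ofAdd a : Multiplicative ℤ) : ℤₘ₀) ≤ 1 := by
  rw [← zone_lem]; exact zle_lem.mpr h

lemma exists_ofAdd {K : Type*} [Field K] (vK : Valuation K ℤₘ₀) {c : K} (hc : c ≠ 0) :
    ∃ t : ℤ, vK c = ofAdd t := by
  have h0 : vK c ≠ 0 := by simpa using hc
  obtain ⟨g, hg⟩ := WithZero.ne_zero_iff_exists.mp h0
  exact ⟨g.toAdd, by rw [← hg]; rfl⟩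

lemma natcast_le_one {K : Type*} [Field K] (vK : Valuation K ℤₘ₀) (t : ℕ) : vK (t : K) ≤ 1 := by
  induction t with
  | zero => simp
  | succ t ih =>
    push_cast
    exact le_trans (vK.map_add _ _) (max_le ih (le_of_eq vK.map_one))

lemma unit_iff_val_one {K : Type*} [Field K] (vK : Valuation K ℤₘ₀) (z : vK.valuationSubring) :
    IsUnit z ↔ vK (z : K) = 1 := by
  constructor
  · rintro ⟨w, rfl⟩
    have h1 : ((w : vK.valuationSubring) : K) * (((w⁻¹ : _) : vK.valuationSubring) : K) = 1 := by
      rw [← Subring.coe_mul]; norm_cast; simp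
    have hx : vK ((w : vK.valuationSubring) : K) ≤ 1 := (w : vK.valuationSubring).2
    have hx' : vK (((w⁻¹ : _) : vK.valuationSubring) : K) ≤ 1 := ((w⁻¹ : _) : vK.valuationSubring).2
    refine le_antisymm hx ?_
    have hh := map_mul vK ((w : vK.valuationSubring) : K) (((w⁻¹ : _) : vK.valuationSubring) : K)
    rw [h1, map_one] at hh
    calc (1 : ℤₘ₀) = _ * _ := hh
      _ ≤ vK ((w : vK.valuationSubring) : K) * 1 := mul_le_mul_right hx' _
      _ = vK ((w : vK.valuationSubring) : K) := mul_one _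
  · intro hz
    have hz0 : (z : K) ≠ 0 := by
      intro h; rw [h, map_zero] at hz; exact zero_ne_one hz
    have hinv : vK (z : K)⁻¹ ≤ 1 := by rw [map_inv₀, hz, inv_one]
    refine IsUnit.of_mul_eq_one (a := z) ⟨(z : K)⁻¹, hinv⟩ (Subtype.ext ?_)
    exact mul_inv_cancel₀ hz0

lemma mem_max_iff {K : Type*} [Field K] (vK : Valuation K ℤₘ₀) (z : vK.valuationSubring) :
    z ∈ maximalIdeal vK.valuationSubring ↔ vK (z : K) < 1 := by
  rw [mem_maximalIdeal, mem_nonunits_iff, unit_iff_val_one]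
  exact ⟨fun h => lt_of_le_of_ne z.2 h, fun h => ne_of_lt h⟩

/-- In an ultrametric setting, if the nonzero-valued terms of a finite sum have pairwise
distinct valuations, then each term's valuation is at most the valuation of the sum. -/
lemma term_le_sum_val {L : Type*} [Field L] (vL : Valuation L ℤₘ₀) {ι : Type*}
    (s : Finset ι) (f : ι → L)
    (hdist : ∀ i ∈ s, ∀ j ∈ s, i ≠ j → vL (f i) ≠ 0 → vL (f j) ≠ 0 → vL (f i) ≠ vL (f j)) :
    ∀ i ∈ s, vL (f i) ≤ vL (∑ j ∈ s, f j) := by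
  classical
  set T := s.filter (fun i => vL (f i) ≠ 0) with hT
  by_cases hTne : T.Nonempty
  · obtain ⟨j, hjT, hjsup⟩ := Finset.exists_mem_eq_sup T hTne (fun i => vL (f i))
    have hjs : j ∈ s := (Finset.mem_filter.mp hjT).1
    have hj0 : vL (f j) ≠ 0 := (Finset.mem_filter.mp hjT).2
    have hlt : ∀ i ∈ s \ {j}, vL (f i) < vL (f j) := by
      intro i hi
      rw [Finset.mem_sdiff, Finset.mem_singleton] at hi
      by_cases hi0 : vL (f i) = 0
      · rw [hi0]; exact zero_lt_iff.mpr hj0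
      · have hiT : i ∈ T := Finset.mem_filter.mpr ⟨hi.1, hi0⟩
        have hle : vL (f i) ≤ vL (f j) := by
          rw [← hjsup]; exact Finset.le_sup (f := fun i => vL (f i)) hiT
        exact lt_of_le_of_ne hle (hdist i hi.1 j hjs hi.2 hi0 hj0)
    have hsum := Valuation.map_sum_eq_of_lt vL hjs hlt
    intro i his
    by_cases hi0 : vL (f i) = 0
    · rw [hi0]; exact zero_le'
    · by_cases hij : i = j
      · rw [hij, hsum]
      · exact le_of_lt (by rw [hsum]; exact hlt i (Finset.mem_sdiff.mpr ⟨his, by simpa using hij⟩))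
  · intro i his
    by_cases hi0 : vL (f i) = 0
    · rw [hi0]; exact zero_le'
    · exact absurd ⟨i, Finset.mem_filter.mpr ⟨his, hi0⟩⟩ hTne

/-- Elements with valuations in pairwise distinct classes mod the value group of the base
field are linearly independent. -/
lemma li_of_val {K L : Type*} [Field K] [Field L] [Algebra K L]
    (vK : Valuation K ℤₘ₀) (vL : Valuation L ℤₘ₀) (e : ℕ)
    (hcomp : ∀ x : K, vL (algebraMap K L x) = vK x ^ e)
    {k : ℕ} (w : Fin k → L) (s : Fin k → ℤ)
    (hw : ∀ i, vL (w i) = ((ofAdd (s i) : Multiplicative ℤ) : ℤₘ₀))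
    (hdist : ∀ i j : Fin k, i ≠ j → ¬ ((e:ℤ) ∣ s i - s j)) :
    LinearIndependent K w := by
  rw [Fintype.linearIndependent_iff]
  intro g hg
  by_contra hne
  push_neg at hne
  obtain ⟨i₀, hi₀⟩ := hne
  have hval : ∀ i : Fin k, g i ≠ 0 → ∃ τ : ℤ,
      vL (g i • w i) = ofAdd ((e:ℤ) * τ + s i) := by
    intro i hgi
    obtain ⟨τ, hτ⟩ := exists_ofAdd vK hgi
    refine ⟨τ, ?_⟩
    rw [Algebra.smul_def, map_mul, hcomp, hτ, hw, zpow_lem, zmul_lem]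
  have hd : ∀ i ∈ Finset.univ, ∀ j ∈ Finset.univ, i ≠ j →
      vL (g i • w i) ≠ 0 → vL (g j • w j) ≠ 0 →
      vL (g i • w i) ≠ vL (g j • w j) := by
    intro i _ j _ hij hi0 hj0
    have hgi : g i ≠ 0 := by
      intro h; rw [h, zero_smul, map_zero] at hi0; exact hi0 rfl
    have hgj : g j ≠ 0 := by
      intro h; rw [h, zero_smul, map_zero] at hj0; exact hj0 rfl
    obtain ⟨τi, hτi⟩ := hval i hgi
    obtain ⟨τj, hτj⟩ := hval j hgj
    rw [hτi, hτj]
    intro heq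
    have := zeq_lem.mp heq
    exact hdist i j hij ⟨τj - τi, by linarith⟩
  have hle := term_le_sum_val vL Finset.univ (fun i => g i • w i) hd i₀ (Finset.mem_univ i₀)
  rw [hg, map_zero] at hle
  obtain ⟨τ, hτ⟩ := hval i₀ hi₀
  rw [hτ] at hle
  exact WithZero.coe_ne_zero (le_zero_iff.mp hle)

set_option maxHeartbeats 1000000 in
/-- Lemma 2.4 (4): Let `K` be a complete discrete valuation field of mixed characteristic
`(0, p)` containing a primitive `p`-th root of unity, with prime element `π` and
`e_K = ord_K p`, and let `L = K(α)` be the Kummer extension given by `α ^ p = a` with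
`a ∈ (1 + π^n u)(1 + π^{n+1} 𝒪_K)`, where `p ∤ n`, `1 ≤ n < e_K p/(p-1)` and
`u ∈ 𝒪_K^×`.  Then `e(L/K) = p` and the residue field of `L` equals that of `K`. -/
theorem kummer_ramified_unit_part
    (p : ℕ) (hp : p.Prime)
    (K : Type*) [Field K] [CharZero K] (vK : Valuation K ℤₘ₀)
    (hsurjK : Function.Surjective vK)
    (hcompl : IsAdicComplete (maximalIdeal vK.valuationSubring) vK.valuationSubring)
    (hres : CharP (ResidueField vK.valuationSubring) p)
    (ζ : K) (hζ : IsPrimitiveRoot ζ p)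
    (L : Type*) [Field L] [Algebra K L] (vL : Valuation L ℤₘ₀)
    (hsurjL : Function.Surjective vL)
    (e : ℕ) (he : 0 < e) (hcomp : ∀ x : K, vL (algebraMap K L x) = vK x ^ e)
    (π : K) (hπ : vK π = ((ofAdd (-1 : ℤ) : Multiplicative ℤ) : ℤₘ₀))
    (eK : ℕ) (heK : vK (p : K) = ((ofAdd (-(eK : ℤ)) : Multiplicative ℤ) : ℤₘ₀))
    (n : ℕ) (hn : 1 ≤ n) (hpn : ¬ p ∣ n) (hbound : n * (p - 1) < eK * p)
    (u : vK.valuationSubring) (huunit : IsUnit u)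
    (a : K)
    (ha : ∃ c : K, vK c ≤ 1 ∧ a = (1 + π ^ n * (u : K)) * (1 + π ^ (n + 1) * c))
    (α : L) (hα : α ^ p = algebraMap K L a)
    (hgen : IntermediateField.adjoin K {α} = ⊤) :
    e = p ∧ Function.Surjective (ResHom vK vL e he hcomp) := by
  obtain ⟨c, hc1, hc2⟩ := ha
  have hp0 : p ≠ 0 := hp.ne_zero
  have hppos : 0 < p := hp.pos
  have hp2 : 2 ≤ p := hp.two_le
  -- basic valuations
  have hπr : ∀ r : ℕ, vK (π ^ r) = ((ofAdd (-(r:ℤ)) : Multiplicative ℤ) : ℤₘ₀) := by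
    intro r
    rw [map_pow, hπ, zpow_lem]
    congr 1; ring
  have hu1 : vK (u : K) = 1 := (unit_iff_val_one vK u).mp huunit
  have hfac1 : vK (1 + π ^ n * (u : K)) = 1 := by
    apply Valuation.map_one_add_of_lt
    calc vK (π ^ n * (u : K)) = vK (π ^ n) * vK (u : K) := map_mul vK _ _
      _ = ((ofAdd (-(n:ℤ)) : Multiplicative ℤ) : ℤₘ₀) := by rw [hπr, hu1, mul_one]
      _ < 1 := zlt_one_lem (by omega)
  have hfac2 : vK (1 + π ^ (n+1) * c) = 1 := by
    apply Valuation.map_one_add_of_lt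
    calc vK (π ^ (n+1) * c) = vK (π ^ (n+1)) * vK c := map_mul vK _ _
      _ ≤ ((ofAdd (-((n:ℤ)+1)) : Multiplicative ℤ) : ℤₘ₀) * 1 := by
          rw [hπr]; exact mul_le_mul' (by push_cast; exact le_rfl) hc1
      _ < 1 := by rw [mul_one]; exact zlt_one_lem (by linarith [(Int.ofNat_nonneg n)])
  have hva : vK a = 1 := by rw [hc2, map_mul, hfac1, hfac2, one_mul]
  have ha1 : vK (a - 1) = ((ofAdd (-(n:ℤ)) : Multiplicative ℤ) : ℤₘ₀) := by
    have hrw : a - 1 = π ^ n * ((u:K) + (π * c + π ^ (n+1) * ((u:K) * c))) := by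
      rw [hc2]; ring
    have huc : vK ((u:K) * c) ≤ 1 := by
      rw [map_mul, hu1, one_mul]; exact hc1
    have hy : vK (π * c + π ^ (n+1) * ((u:K) * c)) < 1 := by
      apply lt_of_le_of_lt (vK.map_add _ _)
      apply max_lt
      · calc vK (π * c) = vK π * vK c := map_mul vK _ _
          _ ≤ ((ofAdd (-1:ℤ) : Multiplicative ℤ) : ℤₘ₀) * 1 := by
              rw [hπ]; exact mul_le_mul' le_rfl hc1
          _ < 1 := by rw [mul_one]; exact zlt_one_lem (by norm_num)
      · calc vK (π ^ (n+1) * ((u:K) * c)) = vK (π ^ (n+1)) * vK ((u:K) * c) := map_mul vK _ _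
          _ ≤ ((ofAdd (-((n:ℤ)+1)) : Multiplicative ℤ) : ℤₘ₀) * 1 := by
              rw [hπr]; exact mul_le_mul' (by push_cast; exact le_rfl) huc
          _ < 1 := by rw [mul_one]; exact zlt_one_lem (by linarith [(Int.ofNat_nonneg n)])
    have hinner : vK ((u:K) + (π * c + π ^ (n+1) * ((u:K) * c))) = 1 := by
      rw [← hu1]
      exact Valuation.map_add_eq_of_lt_left vK (by rw [hu1]; exact hy)
    rw [hrw, map_mul, hinner, mul_one, hπr]
  have hAa1 : vL (algebraMap K L a - 1) = ((ofAdd (-((n:ℤ) * e)) : Multiplicative ℤ) : ℤₘ₀) := by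
    have h1 : algebraMap K L a - 1 = algebraMap K L (a - 1) := by
      rw [map_sub, map_one]
    rw [h1, hcomp, ha1, zpow_lem, zeq_lem]
    ring
  have hvα : vL α = 1 := by
    have h1 : vL α ^ p = 1 := by rw [← map_pow, hα, hcomp, hva, one_pow]
    rcases lt_trichotomy (vL α) 1 with h | h | h
    · exact absurd (h1 ▸ pow_lt_one' h hp0) (lt_irrefl 1)
    · exact h
    · exact absurd (h1 ▸ one_lt_pow' h hp0) (lt_irrefl 1)
  set x : L := α - 1 with hxdef
  have hx0 : x ≠ 0 := by
    intro h
    have hα1 : α = 1 := by rwa [hxdef, sub_eq_zero] at h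
    have : algebraMap K L a - 1 = 0 := by rw [← hα, hα1, one_pow, sub_self]
    rw [this, map_zero] at hAa1
    exact WithZero.coe_ne_zero hAa1.symm
  obtain ⟨μ, hμ⟩ := exists_ofAdd vL hx0
  have hμ0 : μ ≤ 0 := by
    have h1 : vL x ≤ 1 := by
      rw [hxdef]
      exact le_trans (vL.map_sub _ _) (max_le (le_of_eq hvα) (le_of_eq vL.map_one))
    rw [hμ] at h1
    exact zle_lem.mp (by rwa [zone_lem])
  -- binomial expansion
  have hsum : algebraMap K L a = ∑ i ∈ Finset.range (p+1), x ^ i * (p.choose i : L) := by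
    rw [← hα]
    have hax : α = x + 1 := by rw [hxdef]; ring
    rw [hax, add_pow]
    simp [one_pow]
  have hsum1 : algebraMap K L a - 1 = ∑ i ∈ Finset.range p, x ^ (i+1) * (p.choose (i+1) : L) := by
    rw [hsum, Finset.sum_range_succ']
    simp
  obtain ⟨k, hk⟩ : ∃ k, p = k + 1 := ⟨p - 1, (Nat.succ_pred_eq_of_pos hppos).symm⟩
  have hsum2 : algebraMap K L a - 1
      = (∑ i ∈ Finset.range k, x ^ (i+1) * (p.choose (i+1) : L)) + x ^ p := by
    rw [hsum1]
    conv_lhs => rw [hk]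
    rw [Finset.sum_range_succ]
    rw [Nat.choose_self, ← hk]
    simp
  -- bound on middle terms
  have hmid : ∀ i ∈ Finset.range k, vL (x ^ (i+1) * (p.choose (i+1) : L))
      ≤ ((ofAdd (μ - (e:ℤ) * eK) : Multiplicative ℤ) : ℤₘ₀) := by
    intro i hi
    have hik : i < k := Finset.mem_range.mp hi
    have hdvd : p ∣ p.choose (i+1) := hp.dvd_choose_self (Nat.succ_ne_zero i) (by omega)
    obtain ⟨d, hd⟩ := hdvd
    have hC : vK ((p.choose (i+1) : K)) ≤ ((ofAdd (-(eK:ℤ)) : Multiplicative ℤ) : ℤₘ₀) := by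
      rw [hd]
      push_cast
      rw [map_mul, heK]
      calc ((ofAdd (-(eK:ℤ)) : Multiplicative ℤ) : ℤₘ₀) * vK (d : K)
          ≤ ((ofAdd (-(eK:ℤ)) : Multiplicative ℤ) : ℤₘ₀) * 1 :=
            mul_le_mul' le_rfl (natcast_le_one vK d)
        _ = _ := mul_one _
    have hCL : vL ((p.choose (i+1) : L)) ≤ ((ofAdd (-((e:ℤ) * eK)) : Multiplicative ℤ) : ℤₘ₀) := by
      have hcast : ((p.choose (i+1) : L)) = algebraMap K L ((p.choose (i+1) : K)) := by
        rw [map_natCast]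
      rw [hcast, hcomp]
      calc vK ((p.choose (i+1) : K)) ^ e
          ≤ ((ofAdd (-(eK:ℤ)) : Multiplicative ℤ) : ℤₘ₀) ^ e := pow_le_pow_left' hC e
        _ = ((ofAdd (-((e:ℤ) * eK)) : Multiplicative ℤ) : ℤₘ₀) := by rw [zpow_lem, zeq_lem]; ring
    have hxi : vL (x ^ (i+1)) = ((ofAdd (((i:ℤ)+1) * μ) : Multiplicative ℤ) : ℤₘ₀) := by
      rw [map_pow, hμ, zpow_lem, zeq_lem]
      push_cast; ring
    calc vL (x ^ (i+1) * (p.choose (i+1) : L)) = vL (x ^ (i+1)) * vL ((p.choose (i+1) : L)) :=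
          map_mul vL _ _
      _ ≤ ((ofAdd (((i:ℤ)+1) * μ) : Multiplicative ℤ) : ℤₘ₀)
          * ((ofAdd (-((e:ℤ) * eK)) : Multiplicative ℤ) : ℤₘ₀) :=
          mul_le_mul' (le_of_eq hxi) hCL
      _ = ((ofAdd (((i:ℤ)+1) * μ - (e:ℤ) * eK) : Multiplicative ℤ) : ℤₘ₀) := by
          rw [zmul_lem, zeq_lem]; ring
      _ ≤ _ := zle_lem.mpr (by nlinarith [Int.ofNat_nonneg i])
  have hT : vL (∑ i ∈ Finset.range k, x ^ (i+1) * (p.choose (i+1) : L))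
      ≤ ((ofAdd (μ - (e:ℤ) * eK) : Multiplicative ℤ) : ℤₘ₀) := vL.map_sum_le hmid
  have hxp : vL (x ^ p) = ((ofAdd ((p:ℤ) * μ) : Multiplicative ℤ) : ℤₘ₀) := by
    rw [map_pow, hμ, zpow_lem]
  have heKe : (1:ℤ) ≤ (e:ℤ) := by exact_mod_cast he
  have hbz : (n:ℤ) * ((p:ℤ) - 1) < (eK:ℤ) * p := by
    have := hbound
    have hcast : ((n * (p-1) : ℕ) : ℤ) < ((eK * p : ℕ) : ℤ) := by exact_mod_cast this
    push_cast [Nat.cast_sub (by omega : 1 ≤ p)] at hcast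
    linarith
  -- key equation p * μ = -(n * e)
  have hkey : (p:ℤ) * μ = -((n:ℤ) * e) := by
    by_cases hcase : ((ofAdd (μ - (e:ℤ) * eK) : Multiplicative ℤ) : ℤₘ₀)
        < ((ofAdd ((p:ℤ) * μ) : Multiplicative ℤ) : ℤₘ₀)
    · have hlt : vL (∑ i ∈ Finset.range k, x ^ (i+1) * (p.choose (i+1) : L)) < vL (x ^ p) := by
        rw [hxp]; exact lt_of_le_of_lt hT hcase
      have heq := Valuation.map_add_eq_of_lt_right vL hlt
      rw [← hsum2, hAa1, hxp] at heq
      have := zeq_lem.mp heq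
      linarith
    · exfalso
      push_neg at hcase
      have h1 : (p:ℤ) * μ ≤ μ - (e:ℤ) * eK := zle_lem.mp hcase
      have h2 : vL (algebraMap K L a - 1) ≤ ((ofAdd (μ - (e:ℤ) * eK) : Multiplicative ℤ) : ℤₘ₀) := by
        rw [hsum2]
        exact le_trans (vL.map_add _ _) (max_le hT (by rw [hxp]; exact hcase))
      rw [hAa1] at h2
      have h3 : -((n:ℤ) * e) ≤ μ - (e:ℤ) * eK := zle_lem.mp h2
      nlinarith [mul_le_mul_of_nonneg_left h3 (by linarith : (0:ℤ) ≤ (p:ℤ) - 1)]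
  have hpe : p ∣ e := by
    have hdZ : (p:ℤ) ∣ (n:ℤ) * e := ⟨-μ, by linarith⟩
    have hdN : p ∣ n * e := by exact_mod_cast hdZ
    exact (hp.dvd_mul.mp hdN).resolve_left hpn
  -- finite dimensionality
  have hint : IsIntegral K α := by
    refine ⟨Polynomial.X ^ p - Polynomial.C a, Polynomial.monic_X_pow_sub_C a hp0, ?_⟩
    simp [Polynomial.eval₂_sub, hα]
  have hfd : FiniteDimensional K L := by
    have h := IntermediateField.adjoin.finiteDimensional hint
    rw [hgen] at h
    exact (IntermediateField.topEquiv (F := K) (E := L)).toLinearEquiv.finiteDimensional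
  have hdle : Module.finrank K L ≤ p := by
    have h1 : Module.finrank K (IntermediateField.adjoin K {α}) = (minpoly K α).natDegree :=
      IntermediateField.adjoin.finrank hint
    rw [hgen, IntermediateField.finrank_top'] at h1
    rw [h1]
    have hq0 : (Polynomial.X ^ p - Polynomial.C a : Polynomial K) ≠ 0 :=
      (Polynomial.monic_X_pow_sub_C a hp0).ne_zero
    have hdvd := minpoly.dvd K α (p := Polynomial.X ^ p - Polynomial.C a)
      (by simp [Polynomial.eval₂_sub, hα])
    have := Polynomial.natDegree_le_of_dvd hdvd hq0
    rwa [Polynomial.natDegree_X_pow_sub_C] at this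
  have heled : e ≤ Module.finrank K L := by
    obtain ⟨y, hy⟩ := hsurjL ((ofAdd (-1:ℤ) : Multiplicative ℤ) : ℤₘ₀)
    have hli := li_of_val vK vL e hcomp (fun i : Fin e => y ^ (i:ℕ)) (fun i => -((i:ℕ):ℤ))
      (fun i => by rw [map_pow, hy, zpow_lem, zeq_lem]; ring)
      (fun i j hij hdvd => by
        apply hij
        have hb1 : ((i:ℕ):ℤ) < e := by exact_mod_cast i.2
        have hb2 : ((j:ℕ):ℤ) < e := by exact_mod_cast j.2
        have h2 : -((i:ℕ):ℤ) - (-((j:ℕ):ℤ)) = 0 := Int.eq_zero_of_abs_lt_dvd hdvd (by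
          rw [abs_sub_lt_iff]
          constructor <;> omega)
        have h3 : (i:ℕ) = (j:ℕ) := by omega
        exact Fin.ext h3)
    have := hli.fintype_card_le_finrank
    rwa [Fintype.card_fin] at this
  have hep : e = p := le_antisymm (heled.trans hdle) (Nat.le_of_dvd he hpe)
  subst hep
  refine ⟨rfl, ?_⟩
  -- now e has been replaced by e
  have hμn : μ = -(n:ℤ) := by
    have h1 : (e:ℤ) * μ = (e:ℤ) * (-(n:ℤ)) := by rw [hkey]; ring
    exact mul_left_cancel₀ (by exact_mod_cast hp0) h1
  have hfr : Module.finrank K L = e := le_antisymm hdle heled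
  have hpZ : Prime (e:ℤ) := Nat.prime_iff_prime_int.mp hp
  have hpnZ : ¬ (e:ℤ) ∣ (n:ℤ) := by exact_mod_cast hpn
  haveI : NeZero e := ⟨hp0⟩
  have hlib := li_of_val vK vL e hcomp (fun i : Fin e => x ^ (i:ℕ)) (fun i => -(((i:ℕ):ℤ) * n))
    (fun i => by rw [map_pow, hμ, hμn, zpow_lem, zeq_lem]; ring)
    (fun i j hij hdvd => by
      apply hij
      have h1 : -(((i:ℕ):ℤ) * n) - (-(((j:ℕ):ℤ) * n)) = (((j:ℕ):ℤ) - ((i:ℕ):ℤ)) * n := by ring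
      rw [h1] at hdvd
      have h2 : (e:ℤ) ∣ (((j:ℕ):ℤ) - ((i:ℕ):ℤ)) := (hpZ.dvd_mul.mp hdvd).resolve_right hpnZ
      have hb1 : ((i:ℕ):ℤ) < e := by exact_mod_cast i.2
      have hb2 : ((j:ℕ):ℤ) < e := by exact_mod_cast j.2
      have h3 : ((j:ℕ):ℤ) - ((i:ℕ):ℤ) = 0 := Int.eq_zero_of_abs_lt_dvd h2 (by
        rw [abs_sub_lt_iff]
        constructor <;> omega)
      exact Fin.ext (by omega))
  have hcard : Fintype.card (Fin e) = Module.finrank K L := by rw [Fintype.card_fin, hfr]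
  set B := basisOfLinearIndependentOfCardEqFinrank hlib hcard with hBdef
  have hBi : ∀ i : Fin e, B i = x ^ (i:ℕ) := fun i => by
    rw [hBdef, coe_basisOfLinearIndependentOfCardEqFinrank]
  haveI : IsLocalHom (VIntHom vK vL e hcomp) := VIntHom_isLocalHom vK vL e he hcomp
  intro r
  obtain ⟨b, rfl⟩ := IsLocalRing.residue_surjective r
  set g : Fin e → K := fun i => B.repr (b : L) i with hgdef
  have hbL : (b : L) = ∑ i, algebraMap K L (g i) * x ^ (i:ℕ) := by
    conv_lhs => rw [← B.sum_repr (b : L)]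
    refine Finset.sum_congr rfl fun i _ => ?_
    rw [hBi, Algebra.smul_def]
  have hterm : ∀ i : Fin e, g i ≠ 0 → ∃ τ : ℤ,
      vL (algebraMap K L (g i) * x ^ (i:ℕ))
        = ((ofAdd ((e:ℤ) * τ - (i:ℕ) * n) : Multiplicative ℤ) : ℤₘ₀) := by
    intro i hgi
    obtain ⟨τ, hτ⟩ := exists_ofAdd vK hgi
    refine ⟨τ, ?_⟩
    rw [map_mul, hcomp, hτ, map_pow, hμ, hμn, zpow_lem, zpow_lem, zmul_lem, zeq_lem]
    ring
  have hd : ∀ i ∈ (Finset.univ : Finset (Fin e)), ∀ j ∈ (Finset.univ : Finset (Fin e)), i ≠ j →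
      vL (algebraMap K L (g i) * x ^ (i:ℕ)) ≠ 0 →
      vL (algebraMap K L (g j) * x ^ (j:ℕ)) ≠ 0 →
      vL (algebraMap K L (g i) * x ^ (i:ℕ)) ≠ vL (algebraMap K L (g j) * x ^ (j:ℕ)) := by
    intro i _ j _ hij hi0 hj0
    have hgi : g i ≠ 0 := by
      intro h; rw [h, map_zero, zero_mul, map_zero] at hi0; exact hi0 rfl
    have hgj : g j ≠ 0 := by
      intro h; rw [h, map_zero, zero_mul, map_zero] at hj0; exact hj0 rfl
    obtain ⟨τi, hτi⟩ := hterm i hgi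
    obtain ⟨τj, hτj⟩ := hterm j hgj
    rw [hτi, hτj]
    intro heq
    have h0 := zeq_lem.mp heq
    have hdvd : (e:ℤ) ∣ (((j:ℕ):ℤ) - ((i:ℕ):ℤ)) * n := ⟨τj - τi, by linarith⟩
    have h2 := (hpZ.dvd_mul.mp hdvd).resolve_right hpnZ
    have hb1 : ((i:ℕ):ℤ) < e := by exact_mod_cast i.2
    have hb2 : ((j:ℕ):ℤ) < e := by exact_mod_cast j.2
    have h3 : ((j:ℕ):ℤ) - ((i:ℕ):ℤ) = 0 := Int.eq_zero_of_abs_lt_dvd h2 (by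
      rw [abs_sub_lt_iff]
      constructor <;> omega)
    exact hij (Fin.ext (by omega))
  have hles := term_le_sum_val vL Finset.univ (fun i => algebraMap K L (g i) * x ^ (i:ℕ)) hd
  have hble : ∀ i : Fin e, vL (algebraMap K L (g i) * x ^ (i:ℕ)) ≤ vL (b:L) := by
    intro i
    have h := hles i (Finset.mem_univ i)
    rwa [← hbL] at h
  have hlt1 : ∀ i : Fin e, i ≠ 0 → vL (algebraMap K L (g i) * x ^ (i:ℕ)) < 1 := by
    intro i hi
    by_cases hgi : g i = 0
    · rw [hgi, map_zero, zero_mul, map_zero]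
      exact zero_lt_iff.mpr one_ne_zero
    · obtain ⟨τ, hτ⟩ := hterm i hgi
      have hle1 : vL (algebraMap K L (g i) * x ^ (i:ℕ)) ≤ 1 := le_trans (hble i) b.2
      rw [hτ] at hle1 ⊢
      refine lt_of_le_of_ne hle1 ?_
      rw [← zone_lem]
      intro hh
      have h0 := zeq_lem.mp hh
      have hdvd : (e:ℤ) ∣ ((i:ℕ):ℤ) * n := ⟨τ, by linarith⟩
      have h2 := (hpZ.dvd_mul.mp hdvd).resolve_right hpnZ
      have hb1 : ((i:ℕ):ℤ) < e := by exact_mod_cast i.2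
      have h3 : ((i:ℕ):ℤ) = 0 := Int.eq_zero_of_abs_lt_dvd h2 (by
        rw [abs_lt]
        constructor <;> omega)
      have h4 : ((0:Fin e):ℕ) = 0 := Fin.val_zero e
      exact hi (Fin.ext (by omega))
  by_cases hb1 : vL (b : L) < 1
  · refine ⟨0, ?_⟩
    rw [map_zero]
    exact (Ideal.Quotient.eq_zero_iff_mem.mpr ((mem_max_iff vL b).mpr hb1)).symm
  · have hg0le : vK (g 0) ≤ 1 := by
      by_contra hgt
      push_neg at hgt
      have h1 : vL (algebraMap K L (g 0) * x ^ ((0:Fin e):ℕ)) ≤ 1 := le_trans (hble 0) b.2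
      rw [Fin.val_zero, pow_zero, mul_one, hcomp] at h1
      exact absurd h1 (not_le.mpr (one_lt_pow' hgt hp0))
    refine ⟨residue _ ⟨g 0, hg0le⟩, ?_⟩
    have hmapres : ResHom vK vL e he hcomp (residue _ ⟨g 0, hg0le⟩)
        = residue _ (VIntHom vK vL e hcomp ⟨g 0, hg0le⟩) := by
      exact IsLocalRing.ResidueField.map_residue _ _
    rw [hmapres]
    have hsplit : (b : L) - algebraMap K L (g 0)
        = ∑ i ∈ Finset.univ.erase (0 : Fin e), algebraMap K L (g i) * x ^ (i:ℕ) := by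
      conv_lhs => rw [hbL]
      rw [← Finset.add_sum_erase _ _ (Finset.mem_univ (0 : Fin e))]
      rw [Fin.val_zero, pow_zero, mul_one]
      ring
    have hval : vL (((VIntHom vK vL e hcomp ⟨g 0, hg0le⟩ - b : vL.valuationSubring)) : L) < 1 := by
      have hco : (((VIntHom vK vL e hcomp ⟨g 0, hg0le⟩ - b : vL.valuationSubring)) : L)
          = algebraMap K L (g 0) - (b : L) := rfl
      rw [hco]
      have hneg : algebraMap K L (g 0) - (b:L) = -((b:L) - algebraMap K L (g 0)) := by ring
      rw [hneg, Valuation.map_neg, hsplit]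
      exact vL.map_sum_lt one_ne_zero (fun i hi => hlt1 i (Finset.ne_of_mem_erase hi))
    exact Ideal.Quotient.eq.mpr ((mem_max_iff vL _).mpr hval)
end
end

section
/- Let p be a prime number, let T be a finite nonempty set of positive integers, let r : T → ℤ_{≥0} be a function, and let m be an integer with m > r(n) for all n ∈ T. Assume that for every n ∈ T divisible by p one has r(n) = 0. Then there is a unique n ∈ T at which the quantity n·p^{m − r(n)} attains its maximum over T. -/
/-- Let `p` be a prime number, `T` a finite nonempty set of positive integers,
`r : T → ℤ≥0` a function, and `m` an integer with `m > r n` for all `n ∈ T`.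
Assume that `r n = 0` for every `n ∈ T` divisible by `p`.  Then there is a unique
`n ∈ T` at which the quantity `n * p ^ (m - r n)` attains its maximum over `T`. -/
theorem unique_max_of_mul_pow (p : ℕ) (hp : p.Prime) (T : Finset ℕ) (hT : T.Nonempty)
    (hTpos : ∀ n ∈ T, 0 < n) (r : ℕ → ℕ) (m : ℕ) (hm : ∀ n ∈ T, r n < m)
    (hr : ∀ n ∈ T, p ∣ n → r n = 0) :
    ∃! n, n ∈ T ∧ ∀ k ∈ T, k * p ^ (m - r k) ≤ n * p ^ (m - r n) := by
  set f : ℕ → ℕ := fun n => n * p ^ (m - r n) with hf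
  -- injectivity on T
  have hinj : ∀ a ∈ T, ∀ b ∈ T, f a = f b → a = b := by
    have key : ∀ a ∈ T, ∀ b ∈ T, r b ≤ r a → f a = f b → a = b := by
      intro a ha b hb hle heq
      have hma : r a < m := hm a ha
      have hsplit : m - r b = (r a - r b) + (m - r a) := by omega
      have heq' : a * p ^ (m - r a) = b * p ^ (r a - r b) * p ^ (m - r a) := by
        rw [mul_assoc, ← pow_add, ← hsplit]; exact heq
      have hppos : 0 < p ^ (m - r a) := pow_pos hp.pos _
      have hab : a = b * p ^ (r a - r b) := by
        exact Nat.eq_of_mul_eq_mul_right hppos heq'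
      rcases Nat.eq_or_lt_of_le hle with h | h
      · simp [← h] at hab; simpa using hab
      · exfalso
        have hdvd : p ∣ a := by
          rw [hab]
          exact Dvd.dvd.mul_left (dvd_pow_self p (by omega)) b
        have := hr a ha hdvd
        omega
    intro a ha b hb heq
    rcases le_total (r b) (r a) with h | h
    · exact key a ha b hb h heq
    · exact (key b hb a ha h heq.symm).symm
  obtain ⟨n, hn, hmax⟩ := T.exists_max_image f hT
  refine ⟨n, ⟨hn, hmax⟩, ?_⟩
  rintro y ⟨hy, hymax⟩
  exact hinj y hy n hn (le_antisymm (hmax y hy) (hymax n hn))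
end
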